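/- Let n ∈ ℕ, E a complex Hilbert space, F a complex Banach space, and g : E^n → F an n-linear (linear in each component), continuous map that is symmetric in its arguments. Define ĝ(x) = g(x,…,x) for x ∈ E, ‖g‖ = sup{‖g(x_1,…,x_n)‖ : x_i ∈ E, ‖x_i‖ ≤ 1 for each i}, and ‖ĝ‖ = sup{‖ĝ(x)‖ : x ∈ E, ‖x‖ ≤ 1}. Then ‖g‖ = ‖ĝ‖. -/

import Mathlib

open scoped InnerProductSpace

set_option maxHeartbeats 2000000 in
open Finset in
private lemma hormander_findim {n : ℕ} {E F : Type*}
    [NormedAddCommGroup E] [InnerProductSpace ℂ E] [FiniteDimensional ℂ E]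
    [NormedAddCommGroup F] [NormedSpace ℂ F]
    (g : ContinuousMultilinearMap ℂ (fun _ : Fin n => E) F)
    (hsymm : ∀ (σ : Equiv.Perm (Fin n)) (v : Fin n → E), g (v ∘ σ) = g v)
    {M : ℝ} (hM0 : 0 ≤ M) (hM : ∀ x : E, ‖x‖ ≤ 1 → ‖g (fun _ => x)‖ ≤ M)
    (v : Fin n → E) (hv : ∀ i, ‖v i‖ ≤ 1) : ‖g v‖ ≤ M := by
  rcases Nat.eq_zero_or_pos n with hn | hn
  · subst hn
    have hveq : v = fun _ => (0 : E) := funext fun i => i.elim0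
    rw [hveq]
    exact hM 0 (by simp)
  -- the compact set of admissible tuples
  set S : Set (Fin n → E) := {w | ∀ i, ‖w i‖ ≤ 1} with hS_def
  have hScompact : IsCompact S := by
    have hSeq : S = Set.pi Set.univ (fun _ : Fin n => Metric.closedBall (0:E) 1) := by
      ext w
      simp [hS_def, Set.mem_pi, Metric.mem_closedBall, dist_zero_right]
    rw [hSeq]
    exact isCompact_univ_pi fun i => ProperSpace.isCompact_closedBall 0 1
  have hS0 : (fun _ => (0:E)) ∈ S := fun i => by simp
  have hgc : Continuous fun w : Fin n → E => ‖g w‖ := g.coe_continuous.norm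
  obtain ⟨w₀, hw₀S, hw₀max⟩ := hScompact.exists_isMaxOn ⟨_, hS0⟩ hgc.continuousOn
  set a := ‖g w₀‖ with ha_def
  have hva : ‖g v‖ ≤ a := hw₀max hv
  suffices haM : a ≤ M by exact hva.trans haM
  rcases le_or_gt a 0 with ha0 | ha0
  · exact ha0.trans hM0
  -- the compact set of maximizers
  set K : Set (Fin n → E) := S ∩ (fun w => ‖g w‖) ⁻¹' {a} with hK_def
  have hKc : IsCompact K := hScompact.inter_right (isClosed_singleton.preimage hgc)
  -- all maximizers consist of unit vectors
  have hnorm1 : ∀ w ∈ K, ∀ i, ‖w i‖ = 1 := by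
    rintro w ⟨hwS, hwa⟩ i
    have hwa' : ‖g w‖ = a := hwa
    by_contra hne
    have hlt : ‖w i‖ < 1 := lt_of_le_of_ne (hwS i) hne
    have hwi0 : w i ≠ 0 := by
      intro h0
      rw [g.map_coord_zero i h0] at hwa'
      simp at hwa'
      linarith [ha0, hwa'.symm]
    have ht0 : 0 < ‖w i‖ := norm_pos_iff.mpr hwi0
    set t := ‖w i‖ with ht_def
    set w' := Function.update w i (((t⁻¹ : ℝ) : ℂ) • w i) with hw'_def
    have hw'S : w' ∈ S := by
      intro j
      rcases eq_or_ne j i with rfl | hj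
      · simp only [hw'_def, Function.update_self, norm_smul]
        simp only [Complex.norm_real, norm_inv, Real.norm_eq_abs, abs_of_pos ht0]
        rw [inv_mul_cancel₀ ht0.ne']
      · simpa [hw'_def, Function.update_of_ne hj] using hwS j
    have hgw' : ‖g w'‖ = t⁻¹ * a := by
      have h1 : g w' = ((t⁻¹ : ℝ) : ℂ) • g w := by
        conv_rhs => rw [← Function.update_eq_self i w]
        exact g.map_update_smul w i _ (w i)
      rw [h1, norm_smul, hwa', Complex.norm_real, Real.norm_eq_abs,
        abs_of_pos (inv_pos.mpr ht0)]
    have hcontr : ‖g w'‖ ≤ a := hw₀max hw'S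
    rw [hgw'] at hcontr
    have hta : t * (t⁻¹ * a) ≤ t * a := mul_le_mul_of_nonneg_left hcontr ht0.le
    rw [← mul_assoc, mul_inv_cancel₀ ht0.ne', one_mul] at hta
    nlinarith
  -- maximize the coherence functional over the set of maximizers
  set Φ : (Fin n → E) → ℝ := fun w => ∑ k : Fin n, ∑ l : Fin n, ‖(⟪w k, w l⟫_ℂ)‖^2 with hΦ_def
  have hΦc : Continuous Φ := by
    refine continuous_finset_sum _ fun k _ => continuous_finset_sum _ fun l _ => ?_
    exact ((continuous_apply k).inner (continuous_apply l)).norm.pow 2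
  have hKne : K.Nonempty := ⟨w₀, hw₀S, rfl⟩
  obtain ⟨p, hpK, hpmax⟩ := hKc.exists_isMaxOn hKne hΦc.continuousOn
  have hpS : p ∈ S := hpK.1
  have hpa : ‖g p‖ = a := hpK.2
  have hp1 : ∀ k, ‖p k‖ = 1 := hnorm1 p hpK
  -- all entries of the optimal tuple are pairwise parallel
  have hpar : ∀ i j : Fin n, i ≠ j → ‖(⟪p i, p j⟫_ℂ)‖ = 1 := by
    intro i j hij
    have hcs : ‖(⟪p i, p j⟫_ℂ)‖ ≤ 1 := by
      have h := norm_inner_le_norm (𝕜 := ℂ) (p i) (p j)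
      rw [hp1 i, hp1 j] at h; simpa using h
    by_contra hne
    have hc1 : ‖(⟪p i, p j⟫_ℂ)‖ < 1 := lt_of_le_of_ne hcs hne
    set x := p i with hx_def
    set y := p j with hy_def
    set c : ℂ := ⟪x, y⟫_ℂ with hc_def
    set R : Finset (Fin n) := Finset.univ \ {i, j} with hR_def
    set B : ℂ := ∑ k ∈ R, ⟪x, p k⟫_ℂ * (starRingEnd ℂ) (⟪y, p k⟫_ℂ) with hB_def
    set Q : ℝ := ∑ k ∈ R, (‖(⟪x, p k⟫_ℂ)‖^2 + ‖(⟪y, p k⟫_ℂ)‖^2) with hQ_def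
    set z : ℂ := 2 * B - (Q : ℂ) * c with hz_def
    obtain ⟨e, he, hez⟩ : ∃ e : ℂ, ‖e‖ = 1 ∧ (e * z).re = ‖z‖ := by
      rcases eq_or_ne z 0 with hz0 | hz0
      · exact ⟨1, by simp, by simp [hz0]⟩
      · refine ⟨(starRingEnd ℂ) z / ‖z‖, ?_, ?_⟩
        · rw [norm_div, RCLike.norm_conj]
          simp only [Complex.norm_real, Real.norm_eq_abs, abs_of_nonneg (norm_nonneg z)]
          exact div_self (norm_ne_zero_iff.mpr hz0)
        · have h1 : (starRingEnd ℂ) z / (‖z‖ : ℂ) * z = ((‖z‖ : ℝ) : ℂ) := by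
            rw [div_mul_eq_mul_div, mul_comm, Complex.mul_conj]
            rw [Complex.normSq_eq_norm_sq]
            rw [show ((‖z‖ ^ 2 : ℝ) : ℂ) = ((‖z‖ : ℝ) : ℂ) * ((‖z‖ : ℝ) : ℂ) by push_cast; ring]
            rw [mul_div_assoc, div_self (by exact_mod_cast norm_ne_zero_iff.mpr hz0), mul_one]
          rw [h1, Complex.ofReal_re]
    set y' : E := e • y with hy'_def
    have hxye : ⟪x, y'⟫_ℂ = e * c := by rw [hy'_def, inner_smul_right, hc_def]
    have hy'1 : ‖y'‖ = 1 := by rw [hy'_def, norm_smul, he, one_mul, hy_def, hp1 j]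
    set u₀ : E := x + y' with hu0_def
    have hecre : -1 < (e * c).re := by
      have h1 : ‖e * c‖ < 1 := by rw [norm_mul, he, one_mul]; exact hc1
      have h2 : |(e * c).re| ≤ ‖e * c‖ := by
        exact Complex.abs_re_le_norm (e * c)
      have h3 : |(e * c).re| < 1 := lt_of_le_of_lt h2 h1
      linarith [(abs_lt.mp h3).1]
    have hx1 : ‖x‖ = 1 := hp1 i
    have hy1 : ‖y‖ = 1 := hp1 j
    have hN2 : ‖u₀‖^2 = 2 + 2 * (e * c).re := by
      have h := norm_add_sq (𝕜 := ℂ) x y'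
      rw [hxye, hy'1, hx1] at h
      rw [hu0_def, h]
      simp only [RCLike.re_to_complex]
      ring
    have hNpos : 0 < ‖u₀‖ := by
      have h1 : 0 < ‖u₀‖^2 := by rw [hN2]; linarith
      nlinarith [norm_nonneg u₀]
    set N : ℝ := ‖u₀‖ with hN_def
    set u : E := ((N⁻¹ : ℝ) : ℂ) • u₀ with hu_def
    have hu1 : ‖u‖ = 1 := by
      rw [hu_def, norm_smul, Complex.norm_real, Real.norm_eq_abs,
        abs_of_pos (inv_pos.mpr hNpos)]
      exact inv_mul_cancel₀ hNpos.ne'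
    -- the two-slot substitution map
    set D : E → E → (Fin n → E) := fun s t => Function.update (Function.update p i s) j t
      with hD_def
    have hDi : ∀ s t : E, D s t i = s := by
      intro s t
      show Function.update (Function.update p i s) j t i = s
      rw [Function.update_of_ne hij, Function.update_self]
    have hDj : ∀ s t : E, D s t j = t := by
      intro s t
      show Function.update (Function.update p i s) j t j = t
      rw [Function.update_self]
    have hDk : ∀ (s t : E) (k), k ≠ i → k ≠ j → D s t k = p k := by
      intro s t k hki hkj
      show Function.update (Function.update p i s) j t k = p k
      rw [Function.update_of_ne hkj, Function.update_of_ne hki]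
    have hDS : ∀ s t : E, ‖s‖ ≤ 1 → ‖t‖ ≤ 1 → D s t ∈ S := by
      intro s t hs ht k
      rcases eq_or_ne k j with rfl | hkj
      · rw [hDj]; exact ht
      rcases eq_or_ne k i with rfl | hki
      · rw [hDi]; exact hs
      · rw [hDk _ _ _ hki hkj]; exact hpS k
    have hDxy : D x y = p := by
      funext k
      rcases eq_or_ne k j with rfl | hkj
      · rw [hDj, hy_def]
      rcases eq_or_ne k i with rfl | hki
      · rw [hDi, hx_def]
      · rw [hDk _ _ _ hki hkj]
    have hswap : ∀ s t : E, g (D s t) = g (D t s) := by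
      intro s t
      have h := hsymm (Equiv.swap i j) (D t s)
      rw [← h]
      congr 1
      funext k
      rcases eq_or_ne k i with rfl | hki
      · simp only [Function.comp_apply, Equiv.swap_apply_left]
        rw [hDj, hDi]
      rcases eq_or_ne k j with rfl | hkj
      · simp only [Function.comp_apply, Equiv.swap_apply_right]
        rw [hDi, hDj]
      · simp only [Function.comp_apply, Equiv.swap_apply_of_ne_of_ne hki hkj]
        rw [hDk _ _ _ hki hkj, hDk _ _ _ hki hkj]
    have hDcomm : ∀ s t : E, D s t = Function.update (Function.update p j t) i s := by
      intro s t; exact Function.update_comm hij s t p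
    have hsm_i : ∀ (s t : E) (cc : ℂ), g (D (cc • s) t) = cc • g (D s t) := by
      intro s t cc
      rw [hDcomm, hDcomm]
      exact g.map_update_smul _ i cc s
    have hsm_j : ∀ (s t : E) (cc : ℂ), g (D s (cc • t)) = cc • g (D s t) := by
      intro s t cc
      exact g.map_update_smul _ j cc t
    have hadd_i : ∀ (s s' t : E), g (D (s + s') t) = g (D s t) + g (D s' t) := by
      intro s s' t
      rw [hDcomm, hDcomm, hDcomm]
      exact g.map_update_add _ i s s'
    have hadd_j : ∀ (s t t' : E), g (D s (t + t')) = g (D s t) + g (D s t') := by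
      intro s t t'
      exact g.map_update_add _ j t t'
    have hsub_i : ∀ (s s' t : E), g (D (s - s') t) = g (D s t) - g (D s' t) := by
      intro s s' t
      rw [hDcomm, hDcomm, hDcomm]
      exact g.map_update_sub _ i s s'
    have hsub_j : ∀ (s t t' : E), g (D s (t - t')) = g (D s t) - g (D s t') := by
      intro s t t'
      exact g.map_update_sub _ j t t'
    have hDle : ∀ s t : E, ‖g (D s t)‖ ≤ a * (‖s‖ * ‖t‖) := by
      intro s t
      rcases eq_or_ne s 0 with rfl | hs
      · rw [g.map_coord_zero i (by rw [hDi])]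
        simp only [norm_zero]
        positivity
      rcases eq_or_ne t 0 with rfl | ht
      · rw [g.map_coord_zero j (by rw [hDj])]
        simp only [norm_zero]
        positivity
      have hs0 : 0 < ‖s‖ := norm_pos_iff.mpr hs
      have ht0 : 0 < ‖t‖ := norm_pos_iff.mpr ht
      have hsu : ‖((‖s‖⁻¹ : ℝ) : ℂ) • s‖ = 1 := by
        rw [norm_smul, Complex.norm_real, Real.norm_eq_abs, abs_of_pos (inv_pos.mpr hs0)]
        exact inv_mul_cancel₀ hs0.ne'
      have htu : ‖((‖t‖⁻¹ : ℝ) : ℂ) • t‖ = 1 := by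
        rw [norm_smul, Complex.norm_real, Real.norm_eq_abs, abs_of_pos (inv_pos.mpr ht0)]
        exact inv_mul_cancel₀ ht0.ne'
      have h2 : ‖g (D (((‖s‖⁻¹ : ℝ) : ℂ) • s) (((‖t‖⁻¹ : ℝ) : ℂ) • t))‖ ≤ a :=
        hw₀max (hDS _ _ hsu.le htu.le)
      rw [hsm_i, hsm_j, norm_smul, norm_smul, Complex.norm_real, Complex.norm_real,
        Real.norm_eq_abs, Real.norm_eq_abs, abs_of_pos (inv_pos.mpr hs0),
        abs_of_pos (inv_pos.mpr ht0)] at h2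
      have h3 := mul_le_mul_of_nonneg_left h2 (by positivity : (0:ℝ) ≤ ‖s‖ * ‖t‖)
      calc ‖g (D s t)‖
          = ‖s‖ * ‖t‖ * (‖s‖⁻¹ * (‖t‖⁻¹ * ‖g (D s t)‖)) := by
            field_simp
          _ ≤ ‖s‖ * ‖t‖ * a := h3
          _ = a * (‖s‖ * ‖t‖) := by ring
    have hgxy' : ‖g (D x y')‖ = a := by
      rw [hy'_def, hsm_j, norm_smul, he, one_mul, hDxy, hpa]
    have hpol : g (D u₀ u₀) - g (D (x - y') (x - y')) = (4 : ℂ) • g (D x y') := by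
      have h1 : g (D u₀ u₀) = g (D x x) + g (D x y') + (g (D y' x) + g (D y' y')) := by
        rw [hu0_def, hadd_i, hadd_j, hadd_j]
      have h2 : g (D (x - y') (x - y'))
          = g (D x x) - g (D x y') - (g (D y' x) - g (D y' y')) := by
        rw [hsub_i, hsub_j, hsub_j]
      rw [h1, h2, hswap y' x]
      module
    have hvpar : ‖x - y'‖ * ‖x - y'‖ = 4 - N * N := by
      have h := parallelogram_law_with_norm ℂ x y'
      rw [hx1, hy'1] at h
      have hNx : ‖x + y'‖ = N := rfl
      rw [hNx] at h
      linarith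
    have hguu : ‖g (D u u)‖ = a := by
      have hle : ‖g (D u u)‖ ≤ a := hw₀max (hDS u u hu1.le hu1.le)
      have hNu : ((N : ℝ) : ℂ) • u = u₀ := by
        rw [hu_def, smul_smul]
        rw [show ((N : ℝ) : ℂ) * ((N⁻¹ : ℝ) : ℂ) = (((N * N⁻¹ : ℝ)) : ℂ) by push_cast; ring]
        rw [mul_inv_cancel₀ hNpos.ne']
        simp
      have hu₀u : g (D u₀ u₀) = (((N * N : ℝ)) : ℂ) • g (D u u) := by
        conv_lhs => rw [← hNu]
        rw [hsm_i, hsm_j, smul_smul]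
        congr 1
        push_cast
        ring
      have hB' : ‖g (D u₀ u₀)‖ = N * N * ‖g (D u u)‖ := by
        rw [hu₀u, norm_smul, Complex.norm_real, Real.norm_eq_abs,
          abs_of_pos (mul_pos hNpos hNpos)]
      have hA : ‖(4 : ℂ) • g (D x y')‖ = 4 * a := by
        rw [norm_smul, hgxy']
        norm_num
      have hC : ‖g (D (x - y') (x - y'))‖ ≤ (4 - N * N) * a := by
        have h := hDle (x - y') (x - y')
        rw [hvpar] at h
        linarith [h]
      have h4 : 4 * a ≤ N * N * ‖g (D u u)‖ + (4 - N * N) * a := by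
        calc 4 * a = ‖(4 : ℂ) • g (D x y')‖ := hA.symm
          _ = ‖g (D u₀ u₀) - g (D (x - y') (x - y'))‖ := by rw [hpol]
          _ ≤ ‖g (D u₀ u₀)‖ + ‖g (D (x - y') (x - y'))‖ := norm_sub_le _ _
          _ ≤ N * N * ‖g (D u u)‖ + (4 - N * N) * a := by rw [hB']; linarith
      have hge : a ≤ ‖g (D u u)‖ := by
        have hNN : 0 < N * N := mul_pos hNpos hNpos
        nlinarith
      linarith
    have huK : D u u ∈ K := ⟨hDS u u hu1.le hu1.le, hguu⟩
    -- sum splitting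
    have hjR : j ∉ R := by simp [hR_def]
    have hiR : i ∉ insert j R := by simp [hR_def, hij]
    have huniv : (Finset.univ : Finset (Fin n)) = insert i (insert j R) := by
      ext k
      simp only [Finset.mem_univ, true_iff, Finset.mem_insert, hR_def, Finset.mem_sdiff,
        Finset.mem_singleton]
      by_cases hki : k = i
      · tauto
      by_cases hkj : k = j
      · tauto
      · tauto
    have hsplit : ∀ f : Fin n → ℝ, (∑ k, f k) = f i + (f j + ∑ k ∈ R, f k) := by
      intro f
      rw [huniv, Finset.sum_insert hiR, Finset.sum_insert hjR]
    have hRmem : ∀ k ∈ R, k ≠ i ∧ k ≠ j := by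
      intro k hk
      simp only [hR_def, Finset.mem_sdiff, Finset.mem_insert, Finset.mem_singleton] at hk
      tauto
    -- inner products with u
    have hinner_u : ∀ l : Fin n, ⟪u, p l⟫_ℂ
        = ((N⁻¹ : ℝ) : ℂ) * (⟪x, p l⟫_ℂ + (starRingEnd ℂ) e * ⟪y, p l⟫_ℂ) := by
      intro l
      rw [hu_def, inner_smul_left, hu0_def, inner_add_left, hy'_def, inner_smul_left,
        Complex.conj_ofReal]
    have hkey : ∀ l : Fin n, ‖(⟪u, p l⟫_ℂ)‖^2
        = (N⁻¹)^2 * (‖(⟪x, p l⟫_ℂ)‖^2 + ‖(⟪y, p l⟫_ℂ)‖^2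
            + 2 * (e * ((⟪x, p l⟫_ℂ) * (starRingEnd ℂ) (⟪y, p l⟫_ℂ))).re) := by
      intro l
      set A := ⟪x, p l⟫_ℂ
      set Bc := ⟪y, p l⟫_ℂ
      rw [hinner_u l, norm_mul, mul_pow, Complex.norm_real, Real.norm_eq_abs, sq_abs]
      congr 1
      have h1 : ‖A + (starRingEnd ℂ) e * Bc‖^2 = Complex.normSq (A + (starRingEnd ℂ) e * Bc) := by
        rw [Complex.sq_norm]
      rw [h1, Complex.normSq_add, Complex.normSq_mul, Complex.normSq_conj]
      have he' : Complex.normSq e = 1 := by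
        rw [← Complex.sq_norm, he, one_pow]
      rw [he', one_mul, map_mul, Complex.conj_conj]
      rw [← Complex.sq_norm A, ← Complex.sq_norm Bc]
      rw [show A * (e * (starRingEnd ℂ) Bc) = e * (A * (starRingEnd ℂ) Bc) by ring]
    have hsum_u : ∑ l ∈ R, ‖(⟪u, p l⟫_ℂ)‖^2 = (N⁻¹)^2 * (Q + 2 * (e * B).re) := by
      rw [Finset.sum_congr rfl (fun l _ => hkey l), ← Finset.mul_sum]
      congr 1
      rw [Finset.sum_add_distrib, hQ_def]
      congr 1
      rw [← Finset.mul_sum, ← Complex.re_sum, ← Finset.mul_sum, hB_def]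
    have hzre : 2 * (e * B).re - Q * (e * c).re = ‖z‖ := by
      rw [← hez]
      have h1 : e * z = 2 * (e * B) - (Q : ℂ) * (e * c) := by rw [hz_def]; ring
      rw [h1, Complex.sub_re]
      congr 1
      · rw [show (2 : ℂ) * (e * B) = ((2 : ℝ) : ℂ) * (e * B) by norm_num]
        rw [Complex.re_ofReal_mul]
      · rw [Complex.re_ofReal_mul]
    have hQ0 : 0 ≤ Q := Finset.sum_nonneg fun l _ => by positivity
    have hT : 2 * Q ≤ 4 * ∑ l ∈ R, ‖(⟪u, p l⟫_ℂ)‖^2 := by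
      rw [hsum_u]
      have hN2pos : 0 < N^2 := by positivity
      have key : 2 * Q * N^2 ≤ 4 * (Q + 2 * (e * B).re) := by
        rw [hN2]
        nlinarith [norm_nonneg z, hzre]
      have h5 := mul_le_mul_of_nonneg_left key (inv_pos.mpr hN2pos).le
      calc 2 * Q = (N^2)⁻¹ * (2 * Q * N^2) := by field_simp
        _ ≤ (N^2)⁻¹ * (4 * (Q + 2 * (e * B).re)) := h5
        _ = 4 * ((N⁻¹)^2 * (Q + 2 * (e * B).re)) := by rw [inv_pow]; ring
    -- compute the coherence functional at both tuples
    have huu2 : ‖(⟪u, u⟫_ℂ)‖^2 = 1 := by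
      rw [inner_self_eq_norm_sq_to_K (𝕜 := ℂ), hu1]
      norm_num
    have hΦeval : ∀ w : Fin n → E, (∀ k ∈ R, w k = p k) →
        Φ w = (‖(⟪w i, w i⟫_ℂ)‖^2 + ‖(⟪w i, w j⟫_ℂ)‖^2 + ‖(⟪w j, w i⟫_ℂ)‖^2
            + ‖(⟪w j, w j⟫_ℂ)‖^2)
          + ((∑ l ∈ R, ‖(⟪w i, p l⟫_ℂ)‖^2) + (∑ l ∈ R, ‖(⟪w j, p l⟫_ℂ)‖^2)
            + (∑ l ∈ R, ‖(⟪p l, w i⟫_ℂ)‖^2) + (∑ l ∈ R, ‖(⟪p l, w j⟫_ℂ)‖^2))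
          + ∑ k ∈ R, ∑ l ∈ R, ‖(⟪p k, p l⟫_ℂ)‖^2 := by
      intro w hw
      have hrow : ∀ s : E, (∑ l : Fin n, ‖(⟪s, w l⟫_ℂ)‖^2)
          = ‖(⟪s, w i⟫_ℂ)‖^2 + (‖(⟪s, w j⟫_ℂ)‖^2 + ∑ l ∈ R, ‖(⟪s, p l⟫_ℂ)‖^2) := by
        intro s
        rw [hsplit (fun l => ‖(⟪s, w l⟫_ℂ)‖^2)]
        congr 2
        exact Finset.sum_congr rfl fun l hl => by rw [hw l hl]
      have h0 : Φ w = ∑ k : Fin n, ∑ l : Fin n, ‖(⟪w k, w l⟫_ℂ)‖^2 := rfl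
      rw [h0, hsplit (fun k => ∑ l : Fin n, ‖(⟪w k, w l⟫_ℂ)‖^2), hrow (w i), hrow (w j)]
      have hmid : (∑ k ∈ R, ∑ l : Fin n, ‖(⟪w k, w l⟫_ℂ)‖^2)
          = ∑ k ∈ R, (‖(⟪p k, w i⟫_ℂ)‖^2 + (‖(⟪p k, w j⟫_ℂ)‖^2
              + ∑ l ∈ R, ‖(⟪p k, p l⟫_ℂ)‖^2)) := by
        refine Finset.sum_congr rfl fun k hk => ?_
        rw [hw k hk, hrow (p k)]
      rw [hmid, Finset.sum_add_distrib, Finset.sum_add_distrib]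
      ring
    -- evaluate at the new tuple
    have hpk' : ∀ k ∈ R, D u u k = p k := fun k hk =>
      hDk _ _ _ (hRmem k hk).1 (hRmem k hk).2
    have hDDi : D u u i = u := hDi u u
    have hDDj : D u u j = u := hDj u u
    have hsymm_sum : ∀ s : E, (∑ l ∈ R, ‖(⟪p l, s⟫_ℂ)‖^2) = ∑ l ∈ R, ‖(⟪s, p l⟫_ℂ)‖^2 := by
      intro s
      refine Finset.sum_congr rfl fun l hl => ?_
      rw [← inner_conj_symm s (p l), RCLike.norm_conj]
    have hΦD : Φ (D u u) = 4 + 4 * (∑ l ∈ R, ‖(⟪u, p l⟫_ℂ)‖^2)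
        + ∑ k ∈ R, ∑ l ∈ R, ‖(⟪p k, p l⟫_ℂ)‖^2 := by
      rw [hΦeval (D u u) hpk', hDDi, hDDj, huu2, hsymm_sum u]
      ring
    have hc2 : ‖(⟪y, x⟫_ℂ)‖^2 = ‖c‖^2 := by
      rw [hc_def, ← inner_conj_symm y x, RCLike.norm_conj]
    have hxx2 : ‖(⟪x, x⟫_ℂ)‖^2 = 1 := by
      rw [inner_self_eq_norm_sq_to_K (𝕜 := ℂ), hx1]
      norm_num
    have hyy2 : ‖(⟪y, y⟫_ℂ)‖^2 = 1 := by
      rw [inner_self_eq_norm_sq_to_K (𝕜 := ℂ), hy1]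
      norm_num
    have hΦp : Φ p = 2 + 2 * ‖c‖^2 + 2 * Q
        + ∑ k ∈ R, ∑ l ∈ R, ‖(⟪p k, p l⟫_ℂ)‖^2 := by
      rw [hΦeval p (fun k _ => rfl), hsymm_sum (p i), hsymm_sum (p j)]
      have e1 : ‖(⟪p i, p i⟫_ℂ)‖^2 = 1 := hxx2
      have e2 : ‖(⟪p j, p j⟫_ℂ)‖^2 = 1 := hyy2
      have e3 : ‖(⟪p i, p j⟫_ℂ)‖^2 = ‖c‖^2 := rfl
      have e4 : ‖(⟪p j, p i⟫_ℂ)‖^2 = ‖c‖^2 := hc2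
      rw [e1, e2, e3, e4]
      have e5 : Q = (∑ l ∈ R, ‖(⟪p i, p l⟫_ℂ)‖^2) + ∑ l ∈ R, ‖(⟪p j, p l⟫_ℂ)‖^2 := by
        rw [hQ_def, Finset.sum_add_distrib]
      rw [e5]
      ring
    have hfinal : Φ (D u u) ≤ Φ p := hpmax huK
    rw [hΦD, hΦp] at hfinal
    have hcnn : 0 ≤ ‖c‖ := norm_nonneg c
    nlinarith [hT, hc1]
  -- conclusion: all entries are parallel, hence the tuple is essentially diagonal
  set i₀ : Fin n := ⟨0, hn⟩ with hi₀_def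
  have hchoice : ∀ j : Fin n, ∃ r : ℂ, ‖r‖ = 1 ∧ p j = r • p i₀ := by
    intro j
    rcases eq_or_ne j i₀ with rfl | hj
    · exact ⟨1, by simp, by simp⟩
    · have hne1 : ‖(⟪p i₀, p j⟫_ℂ)‖ = ‖p i₀‖ * ‖p j‖ := by
        rw [hp1, hp1, hpar i₀ j (Ne.symm hj)]
        norm_num
      have h0 : p i₀ ≠ 0 := by
        intro h
        have := hp1 i₀
        rw [h, norm_zero] at this
        norm_num at this
      have h0' : p j ≠ 0 := by
        intro h
        have := hp1 j
        rw [h, norm_zero] at this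
        norm_num at this
      obtain ⟨r, hr0, hr⟩ := (norm_inner_eq_norm_iff h0 h0').mp hne1
      refine ⟨r, ?_, hr⟩
      have hn' := congrArg norm hr
      rw [norm_smul, hp1, hp1] at hn'
      simpa using hn'.symm
  choose cc hcc1 hcc2 using hchoice
  have hgp : g p = (∏ j : Fin n, cc j) • g (fun _ => p i₀) := by
    have hpeq : p = fun j => cc j • p i₀ := funext hcc2
    conv_lhs => rw [hpeq]
    exact g.map_smul_univ cc (fun _ => p i₀)
  have hfin : a = ‖g (fun _ => p i₀)‖ := by
    rw [← hpa, hgp, norm_smul, norm_prod]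
    rw [Finset.prod_congr rfl (fun j _ => hcc1 j), Finset.prod_const_one, one_mul]
  rw [hfin]
  exact hM (p i₀) (le_of_eq (hp1 i₀))

theorem stmt3 (n : ℕ) {E F : Type*}
    [NormedAddCommGroup E] [InnerProductSpace ℂ E] [CompleteSpace E]
    [NormedAddCommGroup F] [NormedSpace ℂ F] [CompleteSpace F]
    (g : ContinuousMultilinearMap ℂ (fun _ : Fin n => E) F)
    (hsymm : ∀ (σ : Equiv.Perm (Fin n)) (v : Fin n → E), g (v ∘ σ) = g v) :
    sSup {r : ℝ | ∃ v : Fin n → E, (∀ i, ‖v i‖ ≤ 1) ∧ r = ‖g v‖} =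
      sSup {r : ℝ | ∃ x : E, ‖x‖ ≤ 1 ∧ r = ‖g (fun _ => x)‖} := by
  set A := {r : ℝ | ∃ v : Fin n → E, (∀ i, ‖v i‖ ≤ 1) ∧ r = ‖g v‖} with hA_def
  set Bs := {r : ℝ | ∃ x : E, ‖x‖ ≤ 1 ∧ r = ‖g (fun _ => x)‖} with hB_def
  have hBA : Bs ⊆ A := by
    rintro r ⟨x, hx, rfl⟩
    exact ⟨fun _ => x, fun i => hx, rfl⟩
  have hAbdd : BddAbove A := by
    refine ⟨‖g‖, ?_⟩
    rintro r ⟨v, hv, rfl⟩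
    calc ‖g v‖ ≤ ‖g‖ * ∏ i, ‖v i‖ := g.le_opNorm v
      _ ≤ ‖g‖ * 1 := by
          refine mul_le_mul_of_nonneg_left ?_ (norm_nonneg g)
          exact Finset.prod_le_one (fun i _ => norm_nonneg _) (fun i _ => hv i)
      _ = ‖g‖ := mul_one _
  have hBne : Bs.Nonempty := ⟨‖g (fun _ => 0)‖, 0, by simp, rfl⟩
  have hAne : A.Nonempty := ⟨‖g (fun _ => 0)‖, hBA ⟨0, by simp, rfl⟩⟩
  refine le_antisymm ?_ (csSup_le_csSup hAbdd hBne hBA)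
  refine csSup_le hAne ?_
  rintro r ⟨v, hv, rfl⟩
  set V := Submodule.span ℂ (Set.range v) with hV_def
  haveI : FiniteDimensional ℂ V := FiniteDimensional.span_of_finite ℂ (Set.finite_range v)
  set g' := g.compContinuousLinearMap (fun _ : Fin n => V.subtypeL) with hg'_def
  have hg'app : ∀ w : Fin n → V, g' w = g (fun i => (w i : E)) := fun w => rfl
  have hsymm' : ∀ (σ : Equiv.Perm (Fin n)) (w : Fin n → V), g' (w ∘ σ) = g' w := by
    intro σ w
    rw [hg'app, hg'app]
    have h : (fun i => (((w ∘ σ) i : V) : E)) = (fun i => ((w i : V) : E)) ∘ σ := rfl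
    rw [h, hsymm]
  have hM0 : 0 ≤ sSup Bs := by
    have hmem : ‖g (fun _ => (0:E))‖ ∈ Bs := ⟨0, by simp, rfl⟩
    exact (norm_nonneg _).trans (le_csSup (hAbdd.mono hBA) hmem)
  have hM : ∀ x : V, ‖x‖ ≤ 1 → ‖g' (fun _ => x)‖ ≤ sSup Bs := by
    intro x hx
    rw [hg'app]
    refine le_csSup (hAbdd.mono hBA) ?_
    exact ⟨(x : E), hx, rfl⟩
  set v' : Fin n → V := fun i => ⟨v i, Submodule.subset_span (Set.mem_range_self i)⟩
    with hv'_def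
  have hv'le : ∀ i, ‖v' i‖ ≤ 1 := fun i => hv i
  have hres := hormander_findim g' hsymm' hM0 hM v' hv'le
  rw [hg'app] at hres
  exact hres
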